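/- With notation as in the A_n persistence formula, set R(b,d) := rank(M_d⋯M_b) - rank(M_{d-1}⋯M_b) for b < d and R(b,b) := rank(M_b) - a_b. Then the multiplicity of I(b,d) in M equals R(b-1,d) - R(b,d). -/

import Mathlib

/-- Composite of the structure maps of an `A_n`-type representation:
`chainMap a Ms b len : k^{a b} → k^{a (b+len)}` is `M_{b+len-1} ⋯ M_{b+1} M_b`. -/
def chainMap {k : Type} [Field k] (a : ℕ → ℕ)
    (Ms : ∀ i : ℕ, Matrix (Fin (a (i + 1))) (Fin (a i)) k) :
    (b len : ℕ) → ((Fin (a b) → k) →ₗ[k] (Fin (a (b + len)) → k))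
  | _, 0 => LinearMap.id
  | b, (len + 1) => (Ms (b + len)).mulVecLin ∘ₗ chainMap a Ms b len

/-- `rank (M_d ⋯ M_b)` (the rank of the composite of the structure maps from vertex `b`
through vertex `d`, i.e. of `chainMap a Ms b (d + 1 - b)`). -/
noncomputable def chainRank {k : Type} [Field k] (a : ℕ → ℕ)
    (Ms : ∀ i : ℕ, Matrix (Fin (a (i + 1))) (Fin (a i)) k) (b d : ℕ) : ℕ :=
  Module.finrank k (LinearMap.range (chainMap a Ms b (d + 1 - b)))

/-- The vector space at vertex `i` of the direct sum `⊕_j I(β j, δ j)` of interval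
representations: one copy of `k` for each `j` whose interval contains `i`. -/
abbrev intvSpace {k : Type} [Field k] {N : ℕ} (β δ : Fin N → ℕ) (i : ℕ) : Type :=
  { j : Fin N // β j ≤ i ∧ i ≤ δ j } → k

/-- The structure map from vertex `i` to vertex `i + 1` of `⊕_j I(β j, δ j)`:
the identity on coordinates alive at both `i` and `i + 1`, zero otherwise. -/
def intvStep {k : Type} [Field k] {N : ℕ} (β δ : Fin N → ℕ) (i : ℕ) :
    intvSpace (k := k) β δ i →ₗ[k] intvSpace (k := k) β δ (i + 1) where
  toFun x jh := if h : β jh.1 ≤ i ∧ i ≤ δ jh.1 then x ⟨jh.1, h⟩ else 0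
  map_add' x y := by
    funext jh
    by_cases h : β jh.1 ≤ i ∧ i ≤ δ jh.1 <;> simp [h]
  map_smul' c x := by
    funext jh
    by_cases h : β jh.1 ≤ i ∧ i ≤ δ jh.1 <;> simp [h]

open Classical

/-- The quantity `R(b,d)` from the `A_n` persistence formula:
`R(b,d) = rank(M_d⋯M_b) - rank(M_{d-1}⋯M_b)` for `b < d`, and
`R(b,b) = rank(M_b) - a b`. -/
noncomputable def Rquant {k : Type} [Field k] (a : ℕ → ℕ)
    (Ms : ∀ i : ℕ, Matrix (Fin (a (i + 1))) (Fin (a i)) k) (b d : ℕ) : ℤ :=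
  if b < d then (chainRank a Ms b d : ℤ) - chainRank a Ms b (d - 1)
  else (chainRank a Ms b b : ℤ) - a b

section Aux

open Finset

variable {k : Type} [Field k] {N : ℕ}

/-- The "projection" map from vertex `b` to vertex `c ≥ b` of `⊕_j I(β j, δ j)`. -/
noncomputable def proj (β δ : Fin N → ℕ) (b c : ℕ) :
    intvSpace (k := k) β δ b →ₗ[k] intvSpace (k := k) β δ c where
  toFun x jh := if h : β jh.1 ≤ b ∧ b ≤ δ jh.1 then x ⟨jh.1, h⟩ else 0
  map_add' x y := by
    funext jh
    by_cases h : β jh.1 ≤ b ∧ b ≤ δ jh.1 <;> simp [h]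
  map_smul' c x := by
    funext jh
    by_cases h : β jh.1 ≤ b ∧ b ≤ δ jh.1 <;> simp [h]

lemma proj_apply (β δ : Fin N → ℕ) (b c : ℕ) (x : intvSpace (k := k) β δ b)
    (jh : { j : Fin N // β j ≤ c ∧ c ≤ δ j }) :
    proj (k := k) β δ b c x jh
      = if h : β jh.1 ≤ b ∧ b ≤ δ jh.1 then x ⟨jh.1, h⟩ else 0 := rfl

lemma intvStep_apply (β δ : Fin N → ℕ) (i : ℕ) (x : intvSpace (k := k) β δ i)
    (jh : { j : Fin N // β j ≤ i + 1 ∧ i + 1 ≤ δ j }) :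
    intvStep (k := k) β δ i x jh
      = if h : β jh.1 ≤ i ∧ i ≤ δ jh.1 then x ⟨jh.1, h⟩ else 0 := rfl

lemma proj_self (β δ : Fin N → ℕ) (b : ℕ) :
    proj (k := k) β δ b b = LinearMap.id := by
  apply LinearMap.ext; intro x; funext jh
  rw [proj_apply, dif_pos jh.2]
  rfl

lemma proj_step (β δ : Fin N → ℕ) {b c : ℕ} (hbc : b ≤ c)
    (x : intvSpace (k := k) β δ b) :
    intvStep β δ c (proj β δ b c x) = proj β δ b (c + 1) x := by
  funext jh
  obtain ⟨h1, h2⟩ := jh.2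
  rw [intvStep_apply, proj_apply]
  by_cases h : β jh.1 ≤ b
  · have hc : β jh.1 ≤ c ∧ c ≤ δ jh.1 := ⟨by omega, by omega⟩
    have hb' : β jh.1 ≤ b ∧ b ≤ δ jh.1 := ⟨h, by omega⟩
    rw [dif_pos hc, dif_pos hb', proj_apply, dif_pos hb']
  · have hb' : ¬ (β jh.1 ≤ b ∧ b ≤ δ jh.1) := by tauto
    rw [dif_neg hb']
    by_cases hc : β jh.1 ≤ c ∧ c ≤ δ jh.1
    · rw [dif_pos hc, proj_apply, dif_neg hb']
    · rw [dif_neg hc]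

lemma chain_conj (n : ℕ) (a : ℕ → ℕ)
    (Ms : ∀ i : ℕ, Matrix (Fin (a (i + 1))) (Fin (a i)) k)
    (β δ : Fin N → ℕ)
    (e : ∀ i : ℕ, 1 ≤ i → i ≤ n → ((Fin (a i) → k) ≃ₗ[k] intvSpace (k := k) β δ i))
    (he : ∀ (i : ℕ) (h1 : 1 ≤ i) (h2 : i < n) (x : Fin (a i) → k),
      intvStep β δ i (e i h1 (le_of_lt h2) x)
        = e (i + 1) (Nat.le_succ_of_le h1) h2 ((Ms i).mulVec x))
    (b : ℕ) (hb : 1 ≤ b) :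
    ∀ (len : ℕ) (hlen : b + len ≤ n) (x : Fin (a b) → k),
      e (b + len) (le_trans hb (Nat.le_add_right b len)) hlen (chainMap a Ms b len x)
        = proj β δ b (b + len) (e b hb (le_trans (Nat.le_add_right b len) hlen) x) := by
  intro len
  induction len with
  | zero =>
    intro hlen x
    show e b hb hlen (chainMap a Ms b 0 x) = proj β δ b b (e b hb hlen x)
    rw [proj_self]
    rfl
  | succ len ih =>
    intro hlen x
    have hlen' : b + len ≤ n := by omega
    have h2 : b + len < n := by omega
    show e (b + len + 1) (Nat.le_succ_of_le (le_trans hb (Nat.le_add_right b len))) h2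
        ((Ms (b + len)).mulVec (chainMap a Ms b len x))
      = proj β δ b (b + len + 1) (e b hb (le_trans (Nat.le_add_right b len) hlen') x)
    rw [← he (b + len) (le_trans hb (Nat.le_add_right b len)) h2]
    rw [ih hlen']
    exact proj_step β δ (Nat.le_add_right b len) _

lemma finrank_range_proj (β δ : Fin N → ℕ) {b c : ℕ} (hbc : b ≤ c) :
    Module.finrank k (LinearMap.range (proj (k := k) β δ b c))
      = (Finset.univ.filter fun j => β j ≤ b ∧ c ≤ δ j).card := by
  classical
  let g : {s : {j : Fin N // β j ≤ c ∧ c ≤ δ j} // β s.1 ≤ b}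
      → {j : Fin N // β j ≤ b ∧ b ≤ δ j} :=
    fun s => ⟨s.1.1, s.2, le_trans hbc s.1.2.2⟩
  let π : intvSpace (k := k) β δ b
      →ₗ[k] ({s : {j : Fin N // β j ≤ c ∧ c ≤ δ j} // β s.1 ≤ b} → k) :=
    LinearMap.funLeft k k g
  let ι : ({s : {j : Fin N // β j ≤ c ∧ c ≤ δ j} // β s.1 ≤ b} → k)
      →ₗ[k] intvSpace (k := k) β δ c :=
    { toFun := fun y jh => if h : β jh.1 ≤ b then y ⟨jh, h⟩ else 0
      map_add' := by intro y z; funext jh; by_cases h : β jh.1 ≤ b <;> simp [h]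
      map_smul' := by intro cc y; funext jh; by_cases h : β jh.1 ≤ b <;> simp [h] }
  have hfac : proj (k := k) β δ b c = ι ∘ₗ π := by
    apply LinearMap.ext; intro x; funext jh
    show (if h : β jh.1 ≤ b ∧ b ≤ δ jh.1 then x ⟨jh.1, h⟩ else 0)
        = if h : β jh.1 ≤ b then x (g ⟨jh, h⟩) else 0
    by_cases h : β jh.1 ≤ b
    · have h' : β jh.1 ≤ b ∧ b ≤ δ jh.1 := ⟨h, le_trans hbc jh.2.2⟩
      simp only [dif_pos h', dif_pos h]; rfl
    · have h' : ¬ (β jh.1 ≤ b ∧ b ≤ δ jh.1) := by tauto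
      simp only [dif_neg h', dif_neg h]
  have hπ : Function.Surjective π :=
    LinearMap.funLeft_surjective_of_injective k k g
      (fun s t hst => by
        apply Subtype.ext; apply Subtype.ext
        exact congrArg (fun z : {j : Fin N // β j ≤ b ∧ b ≤ δ j} => z.1) hst)
  have hι : Function.Injective ι := by
    intro y z h
    funext s
    have h' := congrFun h s.1
    show y ⟨s.1, s.2⟩ = z ⟨s.1, s.2⟩
    simpa [ι, dif_pos s.2] using h'
  rw [hfac, LinearMap.range_comp_of_range_eq_top _ (LinearMap.range_eq_top.mpr hπ),
    LinearMap.finrank_range_of_inj hι, Module.finrank_fintype_fun_eq_card]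
  have hcard : Fintype.card {s : {j : Fin N // β j ≤ c ∧ c ≤ δ j} // β s.1 ≤ b}
      = Fintype.card {j : Fin N // (β j ≤ c ∧ c ≤ δ j) ∧ β j ≤ b} :=
    Fintype.card_congr (Equiv.subtypeSubtypeEquivSubtypeInter
      (fun j => β j ≤ c ∧ c ≤ δ j) (fun j => β j ≤ b))
  rw [hcard, Fintype.card_subtype]
  apply congrArg Finset.card
  ext j
  simp only [Finset.mem_filter, Finset.mem_univ, true_and]
  omega

/-- number of intervals `j` with `β j ≤ b` and `c ≤ δ j`. -/
noncomputable def rcount (β δ : Fin N → ℕ) (b c : ℕ) : ℕ :=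
  (Finset.univ.filter fun j => β j ≤ b ∧ c ≤ δ j).card

/-- number of intervals `j` with `β j ≤ b` and `δ j = d`. -/
noncomputable def scount (β δ : Fin N → ℕ) (b d : ℕ) : ℕ :=
  (Finset.univ.filter fun j => β j ≤ b ∧ δ j = d).card

lemma rcount_split (β δ : Fin N → ℕ) (b c : ℕ) :
    rcount β δ b c = rcount β δ b (c + 1) + scount β δ b c := by
  unfold rcount scount
  rw [← Finset.card_union_of_disjoint]
  · apply congrArg Finset.card
    ext j
    simp only [Finset.mem_union, Finset.mem_filter, Finset.mem_univ, true_and]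
    omega
  · rw [Finset.disjoint_left]
    intro j hj1 hj2
    simp only [Finset.mem_filter, Finset.mem_univ, true_and] at hj1 hj2
    omega

lemma scount_split (β δ : Fin N → ℕ) {b : ℕ} (hb : 1 ≤ b) (d : ℕ) :
    scount β δ b d
      = scount β δ (b - 1) d + (Finset.univ.filter fun j => β j = b ∧ δ j = d).card := by
  unfold scount
  rw [← Finset.card_union_of_disjoint]
  · apply congrArg Finset.card
    ext j
    simp only [Finset.mem_union, Finset.mem_filter, Finset.mem_univ, true_and]
    omega
  · rw [Finset.disjoint_left]
    intro j hj1 hj2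
    simp only [Finset.mem_filter, Finset.mem_univ, true_and] at hj1 hj2
    omega


lemma rcount_top {n : ℕ} (β δ : Fin N → ℕ) (hδn : ∀ j, δ j ≤ n) (b : ℕ) :
    rcount β δ b (n + 1) = 0 := by
  unfold rcount
  rw [Finset.card_eq_zero]
  apply Finset.filter_eq_empty_iff.mpr
  intro j _
  have := hδn j
  omega

lemma rcount_zero (β δ : Fin N → ℕ) (hβ1 : ∀ j, 1 ≤ β j) (c : ℕ) :
    rcount β δ 0 c = 0 := by
  unfold rcount
  rw [Finset.card_eq_zero]
  apply Finset.filter_eq_empty_iff.mpr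
  intro j _
  have := hβ1 j
  omega

lemma finrank_range_chainMap (n : ℕ) (a : ℕ → ℕ)
    (Ms : ∀ i : ℕ, Matrix (Fin (a (i + 1))) (Fin (a i)) k)
    (β δ : Fin N → ℕ)
    (e : ∀ i : ℕ, 1 ≤ i → i ≤ n → ((Fin (a i) → k) ≃ₗ[k] intvSpace (k := k) β δ i))
    (he : ∀ (i : ℕ) (h1 : 1 ≤ i) (h2 : i < n) (x : Fin (a i) → k),
      intvStep β δ i (e i h1 (le_of_lt h2) x)
        = e (i + 1) (Nat.le_succ_of_le h1) h2 ((Ms i).mulVec x))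
    {b : ℕ} (hb : 1 ≤ b) (len : ℕ) (hcn : b + len ≤ n) :
    Module.finrank k (LinearMap.range (chainMap a Ms b len)) = rcount β δ b (b + len) := by
  have hE : ((e (b + len) (le_trans hb (Nat.le_add_right b len)) hcn).toLinearMap
        ∘ₗ chainMap a Ms b len)
      = (proj β δ b (b + len))
        ∘ₗ (e b hb (le_trans (Nat.le_add_right b len) hcn)).toLinearMap :=
    LinearMap.ext (chain_conj n a Ms β δ e he b hb len hcn)
  have h1 : Module.finrank k (LinearMap.range (chainMap a Ms b len))
      = Module.finrank k (LinearMap.range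
          ((e (b + len) (le_trans hb (Nat.le_add_right b len)) hcn).toLinearMap
            ∘ₗ chainMap a Ms b len)) := by
    rw [LinearMap.range_comp]
    exact (LinearEquiv.finrank_map_eq _ _).symm
  rw [h1, hE, LinearMap.range_comp_of_range_eq_top _ (LinearEquiv.range _)]
  exact finrank_range_proj β δ (Nat.le_add_right b len)

lemma chainRank_eq_r (n : ℕ) (a : ℕ → ℕ)
    (Ms : ∀ i : ℕ, Matrix (Fin (a (i + 1))) (Fin (a i)) k)
    (β δ : Fin N → ℕ)
    (e : ∀ i : ℕ, 1 ≤ i → i ≤ n → ((Fin (a i) → k) ≃ₗ[k] intvSpace (k := k) β δ i))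
    (he : ∀ (i : ℕ) (h1 : 1 ≤ i) (h2 : i < n) (x : Fin (a i) → k),
      intvStep β δ i (e i h1 (le_of_lt h2) x)
        = e (i + 1) (Nat.le_succ_of_le h1) h2 ((Ms i).mulVec x))
    {b c : ℕ} (hb : 1 ≤ b) (hbc : b ≤ c) (hcn : c ≤ n) :
    chainRank a Ms b (c - 1) = rcount β δ b c := by
  unfold chainRank
  rw [finrank_range_chainMap n a Ms β δ e he hb (c - 1 + 1 - b) (by omega)]
  congr 1
  omega

lemma chainMap_n (n : ℕ) (a : ℕ → ℕ)
    (Ms : ∀ i : ℕ, Matrix (Fin (a (i + 1))) (Fin (a i)) k)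
    (hMsn : Ms n = 0) {b : ℕ} (hbn : b ≤ n) (len : ℕ) (h : b + len = n + 1) :
    chainMap (k := k) a Ms b len = 0 := by
  cases len with
  | zero => exact absurd h (by omega)
  | succ len =>
    have hn : b + len = n := by omega
    subst hn
    show (Ms (b + len)).mulVecLin ∘ₗ chainMap a Ms b len = 0
    rw [hMsn]
    simp

lemma chainRank_n (n : ℕ) (a : ℕ → ℕ)
    (Ms : ∀ i : ℕ, Matrix (Fin (a (i + 1))) (Fin (a i)) k)
    (hMsn : Ms n = 0) {b : ℕ} (hbn : b ≤ n) :
    chainRank a Ms b n = 0 := by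
  unfold chainRank
  rw [chainMap_n n a Ms hMsn hbn (n + 1 - b) (by omega)]
  simp

lemma chainMap_zero_start (a : ℕ → ℕ)
    (Ms : ∀ i : ℕ, Matrix (Fin (a (i + 1))) (Fin (a i)) k)
    (hMs0 : Ms 0 = 0) : ∀ len : ℕ, chainMap (k := k) a Ms 0 (len + 1) = 0 := by
  intro len
  induction len with
  | zero =>
    show (Ms 0).mulVecLin ∘ₗ LinearMap.id = 0
    rw [hMs0]
    simp
  | succ len ih =>
    show (Ms (0 + (len + 1))).mulVecLin ∘ₗ chainMap a Ms 0 (len + 1) = 0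
    rw [ih]
    exact LinearMap.comp_zero _

lemma chainRank_zero_start (a : ℕ → ℕ)
    (Ms : ∀ i : ℕ, Matrix (Fin (a (i + 1))) (Fin (a i)) k)
    (hMs0 : Ms 0 = 0) (d : ℕ) : chainRank a Ms 0 d = 0 := by
  unfold chainRank
  show Module.finrank k (LinearMap.range (chainMap a Ms 0 (d + 1))) = 0
  rw [chainMap_zero_start a Ms hMs0 d]
  simp

lemma a_eq_rcount (n : ℕ) (a : ℕ → ℕ) (β δ : Fin N → ℕ)
    (e : ∀ i : ℕ, 1 ≤ i → i ≤ n → ((Fin (a i) → k) ≃ₗ[k] intvSpace (k := k) β δ i))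
    {b : ℕ} (h1 : 1 ≤ b) (h2 : b ≤ n) :
    a b = rcount β δ b b := by
  classical
  have h := LinearEquiv.finrank_eq (e b h1 h2)
  rw [Module.finrank_fintype_fun_eq_card, Fintype.card_fin,
    Module.finrank_fintype_fun_eq_card, Fintype.card_subtype] at h
  exact h

end Aux

/-- with `R(b,d)` as above (and conventions `Ms 0 = 0`, `Ms n = 0`), the
multiplicity of the interval module `I(b,d)` in the indecomposable decomposition of `M`
equals `R(b-1,d) - R(b,d)`. -/
theorem interval_multiplicity_R {k : Type} [Field k] (n : ℕ) (a : ℕ → ℕ)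
    (Ms : ∀ i : ℕ, Matrix (Fin (a (i + 1))) (Fin (a i)) k)
    (hMs0 : Ms 0 = 0) (hMsn : Ms n = 0)
    (N : ℕ) (β δ : Fin N → ℕ) (hβδ : ∀ j, 1 ≤ β j ∧ β j ≤ δ j ∧ δ j ≤ n)
    (e : ∀ i : ℕ, 1 ≤ i → i ≤ n → ((Fin (a i) → k) ≃ₗ[k] intvSpace (k := k) β δ i))
    (he : ∀ (i : ℕ) (h1 : 1 ≤ i) (h2 : i < n) (x : Fin (a i) → k),
      intvStep β δ i (e i h1 (le_of_lt h2) x)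
        = e (i + 1) (Nat.le_succ_of_le h1) h2 ((Ms i).mulVec x))
    (b d : ℕ) (hb : 1 ≤ b) (hbd : b ≤ d) (hdn : d ≤ n) :
    ((Finset.univ.filter (fun j => β j = b ∧ δ j = d)).card : ℤ)
      = Rquant a Ms (b - 1) d - Rquant a Ms b d := by
  have hβ1 : ∀ j, 1 ≤ β j := fun j => (hβδ j).1
  have hδn : ∀ j, δ j ≤ n := fun j => (hβδ j).2.2
  have key : ∀ b', 1 ≤ b' → b' ≤ d →
      Rquant a Ms b' d = (rcount β δ b' (d + 1) : ℤ) - rcount β δ b' d := by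
    intro b' h1 h2
    have hb'n : b' ≤ n := le_trans h2 hdn
    have hcr2 : chainRank a Ms b' d = rcount β δ b' (d + 1) := by
      rcases eq_or_lt_of_le hdn with rfl | hdn'
      · rw [chainRank_n d a Ms hMsn hb'n, rcount_top β δ hδn b']
      · have h := chainRank_eq_r n a Ms β δ e he h1
          (show b' ≤ d + 1 by omega) (show d + 1 ≤ n by omega)
        simpa using h
    unfold Rquant
    by_cases hlt : b' < d
    · rw [if_pos hlt, hcr2, chainRank_eq_r n a Ms β δ e he h1 h2 hdn]
    · have hbd' : b' = d := by omega
      subst hbd'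
      rw [if_neg hlt, hcr2, a_eq_rcount n a β δ e h1 hb'n]
  have hb1 : Rquant a Ms b d = (rcount β δ b (d + 1) : ℤ) - rcount β δ b d :=
    key b hb hbd
  have hb0 : Rquant a Ms (b - 1) d
      = (rcount β δ (b - 1) (d + 1) : ℤ) - rcount β δ (b - 1) d := by
    rcases Nat.lt_or_ge 1 b with hb2 | hb2
    · exact key (b - 1) (by omega) (by omega)
    · have hb' : b = 1 := by omega
      subst hb'
      show Rquant a Ms 0 d = (rcount β δ 0 (d + 1) : ℤ) - rcount β δ 0 d
      unfold Rquant
      rw [if_pos (show 0 < d by omega), chainRank_zero_start a Ms hMs0 d,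
        chainRank_zero_start a Ms hMs0 (d - 1), rcount_zero β δ hβ1 (d + 1),
        rcount_zero β δ hβ1 d]
  rw [hb0, hb1]
  have k1 := rcount_split β δ b d
  have k2 := rcount_split β δ (b - 1) d
  have k3 := scount_split β δ hb d
  omega
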